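/- The only integer point in the interior of the lower-bound polytope P ⊂ R^n (with defining inequalities ±(Σ_{i<j} x_i/2^i + x_j + Σ_{i>j} x_i/2^{i−1}) ≤ 1 for j = 1,…,n and ±(−x_{ℓ_N}/|N| + Σ_{i∈N,i≠ℓ_N} x_i/|N| − Σ_{i∉N} x_i/|N|^n) ≤ 1 for each N ⊆ {1,…,n}, |N| ≥ 2) is the origin. -/

import Mathlib

/-- Left-hand side `Σ_{i<j} x_i/2^{i} + x_j + Σ_{i>j} x_i/2^{i-1}` (1-based indices in the
paper, 0-based here). -/
noncomputable def lhsJ {n : ℕ} (j : Fin n) (x : Fin n → ℝ) : ℝ :=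
  (∑ i ∈ Finset.univ.filter (fun i => i < j), x i / 2 ^ (i.val + 1)) + x j +
    ∑ i ∈ Finset.univ.filter (fun i => j < i), x i / 2 ^ i.val

/-- Left-hand side `−x_{ℓ_N}/|N| + Σ_{i∈N, i≠ℓ_N} x_i/|N| − Σ_{i∉N} x_i/|N|^n` where
`ℓ_N = min N`. -/
noncomputable def lhsN {n : ℕ} (N : Finset (Fin n)) (h : N.Nonempty) (x : Fin n → ℝ) : ℝ :=
  -x (N.min' h) / (N.card : ℝ) + (∑ i ∈ N.erase (N.min' h), x i / (N.card : ℝ)) -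
    ∑ i ∈ Nᶜ, x i / (N.card : ℝ) ^ n

/-- Membership in the lower-bound polytope `P`. -/
def inLB {n : ℕ} (x : Fin n → ℝ) : Prop :=
  (∀ j : Fin n, |lhsJ j x| ≤ 1) ∧
    ∀ N : Finset (Fin n), ∀ h : 2 ≤ N.card,
      |lhsN N (Finset.card_pos.mp (lt_of_lt_of_le (by norm_num) h)) x| ≤ 1

/-- Index of a defining inequality of the lower-bound polytope: a sign together with
either `j ∈ {1,…,n}` or `N ⊆ {1,…,n}` with `|N| ≥ 2`. -/
abbrev LBIdx (n : ℕ) := (Fin n ⊕ {N : Finset (Fin n) // 2 ≤ N.card}) × Bool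

/-- Left-hand side of the defining inequality of the lower-bound polytope with index `idx`
(each inequality reads `lbIneq idx x ≤ 1`). -/
noncomputable def lbIneq {n : ℕ} (idx : LBIdx n) (x : Fin n → ℝ) : ℝ :=
  match idx with
  | (Sum.inl j, b) => (if b then 1 else -1) * lhsJ j x
  | (Sum.inr N, b) =>
      (if b then 1 else -1) *
        lhsN N.1 (Finset.card_pos.mp (lt_of_lt_of_le (by norm_num) N.2)) x

open Finset in
lemma lb_geo (a : ℕ) : ∀ b : ℕ, a ≤ b →
    ∑ t ∈ Finset.Icc (a+1) b, ((1:ℝ)/2)^t ≤ (1/2)^a - (1/2)^b := by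
  intro b
  induction b with
  | zero => intro h; interval_cases a; simp
  | succ b ih =>
    intro h
    rcases Nat.lt_or_ge a (b+1) with h1 | h2
    · have hab : a ≤ b := by omega
      rw [Finset.sum_Icc_succ_top (by omega)]
      have := ih hab
      have hp : ((1:ℝ)/2)^(b+1) = (1/2)^b/2 := by rw [pow_succ]; ring
      nlinarith [this]
    · have : a = b + 1 := by omega
      subst this
      simp

-- splitting a sum over Fin n at j

open Finset in
lemma lb_sum_split {n : ℕ} (j : Fin n) (g : Fin n → ℝ) :
    ∑ i, g i = (∑ i ∈ Finset.univ.filter (fun i => i < j), g i) + g j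
      + ∑ i ∈ Finset.univ.filter (fun i => j < i), g i := by
  classical
  have h := Finset.sum_filter_add_sum_filter_not Finset.univ (fun i => i < j) g
  have h2 : Finset.univ.filter (fun i => ¬ i < j)
      = insert j (Finset.univ.filter (fun i => j < i)) := by
    ext i
    simp only [Finset.mem_filter, Finset.mem_univ, true_and, Finset.mem_insert, Fin.lt_def,
      Fin.ext_iff]
    omega
  rw [h2, Finset.sum_insert (by simp only [Finset.mem_filter, Finset.mem_univ, true_and]; exact lt_irrefl j)] at h
  linarith [h]

open Finset in
lemma lb_filter_pow_le {n : ℕ} (j : Fin n) :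
    ∑ i ∈ Finset.univ.filter (fun i => j < i), ((1:ℝ)/2)^(i.val)
      ≤ (1/2)^(j.val) - (1/2)^(n-1) := by
  classical
  have hinj : ∀ x ∈ Finset.univ.filter (fun i : Fin n => j < i), ∀ y ∈
      Finset.univ.filter (fun i : Fin n => j < i), x.val = y.val → x = y := by
    intro x _ y _ hxy; exact Fin.ext hxy
  have himg : (Finset.univ.filter (fun i : Fin n => j < i)).image Fin.val
      ⊆ Finset.Icc (j.val+1) (n-1) := by
    intro t ht
    simp only [Finset.mem_image, Finset.mem_filter, Finset.mem_univ, true_and] at ht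
    obtain ⟨i, hi, rfl⟩ := ht
    have := i.isLt
    simp only [Finset.mem_Icc]
    rw [Fin.lt_def] at hi
    omega
  calc ∑ i ∈ Finset.univ.filter (fun i => j < i), ((1:ℝ)/2)^(i.val)
      = ∑ t ∈ (Finset.univ.filter (fun i : Fin n => j < i)).image Fin.val, ((1:ℝ)/2)^t := by
        rw [Finset.sum_image hinj]
    _ ≤ ∑ t ∈ Finset.Icc (j.val+1) (n-1), ((1:ℝ)/2)^t := by
        apply Finset.sum_le_sum_of_subset_of_nonneg himg
        intro t _ _; positivity
    _ ≤ (1/2)^(j.val) - (1/2)^(n-1) := lb_geo j.val (n-1) (by omega)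

open Finset in
lemma lb_tail_abs_le {n : ℕ} (j : Fin n) (x : Fin n → ℝ) (c : ℝ) (hc : 0 ≤ c)
    (h : ∀ i, j < i → |x i| ≤ c) :
    |∑ i ∈ Finset.univ.filter (fun i => j < i), x i / 2^(i.val)|
      ≤ c * ((1/2)^(j.val) - (1/2)^(n-1)) := by
  classical
  calc |∑ i ∈ Finset.univ.filter (fun i => j < i), x i / 2^(i.val)|
      ≤ ∑ i ∈ Finset.univ.filter (fun i => j < i), |x i / 2^(i.val)| :=
        Finset.abs_sum_le_sum_abs _ _
    _ ≤ ∑ i ∈ Finset.univ.filter (fun i => j < i), c * ((1:ℝ)/2)^(i.val) := by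
        apply Finset.sum_le_sum
        intro i hi
        simp only [Finset.mem_filter] at hi
        rw [abs_div, abs_of_pos (by positivity : (0:ℝ) < 2^(i.val)), one_div, inv_pow,
          ← div_eq_mul_inv]
        exact div_le_div_of_nonneg_right (h i hi.2) (by positivity) |>.trans
          (by apply div_le_div_of_nonneg_right le_rfl (by positivity))
    _ = c * ∑ i ∈ Finset.univ.filter (fun i => j < i), ((1:ℝ)/2)^(i.val) := by
        rw [Finset.mul_sum]
    _ ≤ c * ((1/2)^(j.val) - (1/2)^(n-1)) := by
        apply mul_le_mul_of_nonneg_left (lb_filter_pow_le j) hc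

open Finset in
lemma lb_lhsJ_eq {n : ℕ} (j : Fin n) (x : Fin n → ℝ) :
    lhsJ j x = (∑ i, x i / 2^(i.val))/2
      + (∑ i ∈ Finset.univ.filter (fun i => j < i), x i / 2^(i.val))/2
      + x j * (1 - 1/2^(j.val+1)) := by
  unfold lhsJ
  rw [lb_sum_split j (fun i => x i / 2^(i.val))]
  have hA : ∑ i ∈ Finset.univ.filter (fun i => i < j), x i / 2^(i.val+1)
      = (∑ i ∈ Finset.univ.filter (fun i => i < j), x i / 2^(i.val))/2 := by
    rw [Finset.sum_div]
    refine Finset.sum_congr rfl fun i _ => ?_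
    rw [pow_succ]; ring
  rw [hA]
  have h2 : (2:ℝ)^(j.val) ≠ 0 := by positivity
  rw [pow_succ]
  field_simp
  ring

open Finset in
lemma lb_lhsJ_zero {n : ℕ} (h0 : 0 < n) (x : Fin n → ℝ) :
    lhsJ ⟨0, h0⟩ x = ∑ i, x i / 2^(i.val) := by
  unfold lhsJ
  rw [lb_sum_split (⟨0, h0⟩ : Fin n) (fun i => x i / 2^(i.val))]
  have hempty : Finset.univ.filter (fun i : Fin n => i < ⟨0, h0⟩) = ∅ := by
    ext i
    simp only [Finset.mem_filter, Finset.mem_univ, true_and, Fin.lt_def,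
      Finset.notMem_empty, iff_false]
    omega
  rw [hempty]
  simp

open Finset in
lemma lb_lhsJ_neg {n : ℕ} (j : Fin n) (x : Fin n → ℝ) :
    lhsJ j (fun i => -(x i)) = - lhsJ j x := by
  unfold lhsJ
  rw [neg_add, neg_add, ← Finset.sum_neg_distrib, ← Finset.sum_neg_distrib]
  congr 1
  · congr 1
    · exact Finset.sum_congr rfl fun i _ => by ring
  · exact Finset.sum_congr rfl fun i _ => by ring

open Finset in
lemma lb_lhsN_neg {n : ℕ} (N : Finset (Fin n)) (h : N.Nonempty) (x : Fin n → ℝ) :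
    lhsN N h (fun i => -(x i)) = - lhsN N h x := by
  unfold lhsN
  simp only [neg_div, Finset.sum_neg_distrib, neg_neg]
  ring

-- the pair bound: for a < b, given 2-box on entries, |x b - x a| small

open Finset in
lemma lb_pair {n : ℕ} (y : Fin n → ℤ) (a b : Fin n) (hab : a < b)
    (hbox : ∀ j, |(y j : ℝ)| ≤ 2)
    (hN : ∀ N : Finset (Fin n), ∀ h2 : 2 ≤ N.card,
      |lhsN N (Finset.card_pos.mp (lt_of_lt_of_le (by norm_num) h2)) (fun i => (y i : ℝ))| < 1) :
    |(y b : ℝ) - (y a : ℝ)| ≤ 2 := by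
  classical
  have hne : a ≠ b := ne_of_lt hab
  set N : Finset (Fin n) := {a, b} with hNdef
  have hcard : N.card = 2 := by
    rw [hNdef, Finset.card_insert_of_notMem (by simpa using hne), Finset.card_singleton]
  have h2 : 2 ≤ N.card := by omega
  have hmem_a : a ∈ N := by simp [hNdef]
  have hmin : ∀ p : N.Nonempty, N.min' p = a := by
    intro p
    refine le_antisymm (Finset.min'_le N a hmem_a) (Finset.le_min' _ _ _ ?_)
    intro c hc
    rcases Finset.mem_insert.mp hc with rfl | hc
    · exact le_rfl
    · rw [Finset.mem_singleton] at hc; subst hc; exact le_of_lt hab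
  have hNS := hN N h2
  unfold lhsN at hNS
  rw [hmin] at hNS
  have herase : N.erase a = {b} := by
    rw [hNdef]; exact Finset.erase_insert (by simpa using hne)
  rw [herase, Finset.sum_singleton, hcard] at hNS
  -- bound the complement sum
  have hcompl : |∑ i ∈ Nᶜ, (y i : ℝ) / ((2:ℕ) : ℝ) ^ n| ≤ 1/2 := by
    have hcc : (Nᶜ).card = n - 2 := by
      rw [Finset.card_compl, hcard]; simp
    calc |∑ i ∈ Nᶜ, (y i : ℝ) / ((2:ℕ):ℝ) ^ n| ≤ ∑ i ∈ Nᶜ, |(y i : ℝ) / ((2:ℕ):ℝ) ^ n| :=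
          Finset.abs_sum_le_sum_abs _ _
      _ ≤ ∑ i ∈ Nᶜ, 2 / 2 ^ n := by
          apply Finset.sum_le_sum
          intro i _
          push_cast
          rw [abs_div, abs_of_pos (show (0:ℝ) < 2 ^ n by positivity)]
          gcongr
          exact hbox i
      _ = ((n - 2 : ℕ) : ℝ) * (2 / 2 ^ n) := by
          rw [Finset.sum_const, hcc, nsmul_eq_mul]
      _ ≤ 1/2 := by
          have hkey : 4 * (n - 2 : ℕ) ≤ 2 ^ n := by
            rcases le_or_gt n 2 with h | h
            · have : n - 2 = 0 := by omega
              simp [this]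
            · have h1 : (n - 2) < 2 ^ (n - 2) := Nat.lt_two_pow_self (n := n - 2)
              have h2' : 4 * (n-2) < 4 * 2 ^ (n - 2) := by omega
              have h3 : 4 * 2 ^ (n - 2) ≤ 2 ^ n := by
                have heq : 2 ^ (n - 2) * 2 ^ 2 = 2 ^ n := by
                  rw [← pow_add]
                  congr 1
                  omega
                omega
              omega
          have hcast : ((n - 2 : ℕ) : ℝ) * 4 ≤ 2 ^ n := by
            have := (Nat.cast_le (α := ℝ)).mpr hkey
            push_cast at this
            linarith
          have hpos : (0:ℝ) < 2 ^ n := by positivity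
          have heq2 : ((n - 2:ℕ):ℝ) * (2 / 2 ^ n) = (((n-2:ℕ):ℝ) * 4)/(2 * 2 ^ n) := by
            field_simp; ring
          rw [heq2, div_le_div_iff₀ (by positivity) (by norm_num)]
          nlinarith [hcast]
  -- now extract
  have : |(-(y a : ℝ)) / ((2:ℕ):ℝ) + (y b : ℝ) / ((2:ℕ):ℝ)| < 3/2 := by
    have := abs_sub_abs_le_abs_sub (-(y a:ℝ) / ((2:ℕ):ℝ) + (y b:ℝ)/((2:ℕ):ℝ))
      (∑ i ∈ Nᶜ, (y i : ℝ) / ((2:ℕ):ℝ) ^ n)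
    have habs : |(-(y a:ℝ)) / ((2:ℕ):ℝ) + (y b:ℝ)/((2:ℕ):ℝ)
        - ∑ i ∈ Nᶜ, (y i : ℝ) / ((2:ℕ):ℝ) ^ n| < 1 := hNS
    linarith [hcompl, this]
  push_cast at this
  rw [neg_div] at this
  have h22 : |(y b : ℝ) - (y a : ℝ)| < 3 := by
    have h23 : |((y b : ℝ) - (y a : ℝ)) / 2| < 3/2 := by
      convert this using 2; ring
    rw [abs_div, abs_of_pos (by norm_num : (0:ℝ) < 2)] at h23
    linarith
  have hz : |y b - y a| < 3 := by
    rw [← Int.cast_sub, ← Int.cast_abs] at h22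
    exact_mod_cast h22
  have hz2 : |y b - y a| ≤ 2 := by omega
  rw [← Int.cast_sub, ← Int.cast_abs]
  exact_mod_cast hz2

open Finset in
lemma lb_lastStep {n : ℕ} (y : Fin n → ℤ)
    (hJ : ∀ j, |lhsJ j (fun i => (y i : ℝ))| < 1)
    (hN : ∀ N : Finset (Fin n), ∀ h2 : 2 ≤ N.card,
      |lhsN N (Finset.card_pos.mp (lt_of_lt_of_le (by norm_num) h2)) (fun i => (y i : ℝ))| < 1)
    (box1 : ∀ j, |(y j : ℝ)| ≤ 1)
    (l : Fin n) (hl1 : y l = 1) (hbelow : ∀ i, i < l → y i = 0) : False := by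
  classical
  by_cases hk : ∃ k, l < k ∧ y k = 1
  · -- a second +1 after l : lhsJ k is too big
    obtain ⟨k, hlk, hk1⟩ := hk
    have hJk := hJ k
    unfold lhsJ at hJk
    set x : Fin n → ℝ := fun i => (y i : ℝ) with hxdef
    -- the prefix sum A
    set g : Fin n → ℝ := fun i => if i < k then x i / 2^(i.val+1) else 0 with hgdef
    have hAg : ∑ i ∈ Finset.univ.filter (fun i => i < k), x i / 2^(i.val+1) = ∑ i, g i := by
      rw [Finset.sum_filter]
    have hsplit := lb_sum_split l g
    have hzero : ∑ i ∈ Finset.univ.filter (fun i => i < l), g i = 0 := by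
      apply Finset.sum_eq_zero
      intro i hi
      simp only [Finset.mem_filter, Finset.mem_univ, true_and] at hi
      have : (y i : ℝ) = 0 := by rw [hbelow i hi]; norm_num
      simp only [hgdef, hxdef, this, zero_div, ite_self]
    have hgl : g l = ((1:ℝ)/2)^(l.val+1) := by
      simp only [hgdef, if_pos hlk, hxdef, hl1]
      push_cast
      rw [div_pow, one_pow]
    have htailA : ∑ i ∈ Finset.univ.filter (fun i => l < i), g i
        ≥ -(((1:ℝ)/2)^(l.val+1) - (1/2)^(k.val)) := by
      have hb : ∑ i ∈ Finset.univ.filter (fun i => l < i), (-(g i))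
          ≤ ((1:ℝ)/2)^(l.val+1) - (1/2)^(k.val) := by
        calc ∑ i ∈ Finset.univ.filter (fun i => l < i), (-(g i))
            ≤ ∑ i ∈ Finset.univ.filter (fun i => l < i),
                (if i < k then ((1:ℝ)/2)^(i.val+1) else 0) := by
              apply Finset.sum_le_sum
              intro i _
              by_cases hik : i < k
              · simp only [hgdef, if_pos hik]
                have h1 : -(x i) ≤ 1 := by
                  have := box1 i; rw [abs_le] at this; simp only [hxdef]; linarith [this.1]
                rw [div_pow, one_pow, ← neg_div]
                exact div_le_div_of_nonneg_right h1 (by positivity)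
              · simp [hgdef, hik]
          _ = ∑ i ∈ (Finset.univ.filter (fun i => l < i)).filter (fun i => i < k),
                ((1:ℝ)/2)^(i.val+1) := by
              exact (Finset.sum_filter _ _).symm
          _ ≤ ∑ t ∈ Finset.Icc (l.val+2) (k.val), ((1:ℝ)/2)^t := by
              have hinj : ∀ p ∈ (Finset.univ.filter (fun i : Fin n => l < i)).filter
                  (fun i => i < k), ∀ q ∈ (Finset.univ.filter (fun i : Fin n => l < i)).filter
                  (fun i => i < k), p.val + 1 = q.val + 1 → p = q := by
                intro p _ q _ h; exact Fin.ext (by omega)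
              have himg : ∑ t ∈ ((Finset.univ.filter (fun i : Fin n => l < i)).filter
                  (fun i => i < k)).image (fun i => i.val + 1), ((1:ℝ)/2)^t
                  = ∑ i ∈ (Finset.univ.filter (fun i : Fin n => l < i)).filter
                  (fun i => i < k), ((1:ℝ)/2)^(i.val+1) := Finset.sum_image hinj
              rw [← himg]
              apply Finset.sum_le_sum_of_subset_of_nonneg
              · intro t ht
                simp only [Finset.mem_image, Finset.mem_filter, Finset.mem_univ, true_and] at ht
                obtain ⟨i, ⟨hi1, hi2⟩, rfl⟩ := ht
                simp only [Finset.mem_Icc]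
                rw [Fin.lt_def] at hi1 hi2
                omega
              · intro t _ _; positivity
          _ ≤ ((1:ℝ)/2)^(l.val+1) - (1/2)^(k.val) := by
              have := lb_geo (l.val+1) k.val (by rw [Fin.lt_def] at hlk; omega)
              convert this using 3
      have := Finset.sum_neg_distrib (s := Finset.univ.filter (fun i : Fin n => l < i))
        (f := g)
      rw [this] at hb
      linarith
    -- tail T
    have hT := lb_tail_abs_le k x 1 (by norm_num) (fun i _ => box1 i)
    rw [abs_le] at hT
    -- x k = 1
    have hxk : x k = 1 := by simp [hxdef, hk1]
    -- combine
    have hA : ∑ i ∈ Finset.univ.filter (fun i => i < k), x i / 2^(i.val+1)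
        ≥ ((1:ℝ)/2)^(k.val) := by
      rw [hAg, hsplit, hzero, hgl]
      linarith [htailA]
    have habs := (abs_lt.mp hJk).2
    have hdelta : (0:ℝ) < (1/2)^(n-1) := by positivity
    linarith [hT.1, hA, habs]
  · push_neg at hk
    set x : Fin n → ℝ := fun i => (y i : ℝ) with hxdef
    set S : Finset (Fin n) := Finset.univ.filter (fun i => y i ≠ 0) with hSdef
    have memS : l ∈ S := by simp [hSdef, hl1]
    have hSother : ∀ i ∈ S, i ≠ l → y i = -1 := by
      intro i hiS hil
      simp only [hSdef, Finset.mem_filter, Finset.mem_univ, true_and] at hiS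
      have hli : l < i := by
        rcases lt_trichotomy i l with h | h | h
        · exact absurd (hbelow i h) hiS
        · exact absurd h hil
        · exact h
      have h1 : y i ≠ 1 := hk i hli
      have h2 : |y i| ≤ 1 := by
        have := box1 i
        rw [← Int.cast_abs] at this
        exact_mod_cast this
      rw [abs_le] at h2
      omega
    by_cases hc2 : 2 ≤ S.card
    · have hNS := hN S hc2
      unfold lhsN at hNS
      have hminS : ∀ p : S.Nonempty, S.min' p = l := by
        intro p
        refine le_antisymm (Finset.min'_le S l memS) (Finset.le_min' _ _ _ ?_)
        intro b hb
        by_contra hbl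
        push_neg at hbl
        have := hbelow b hbl
        simp only [hSdef, Finset.mem_filter, Finset.mem_univ, true_and] at hb
        exact hb this
      rw [hminS] at hNS
      have hcompl : ∑ i ∈ Sᶜ, (fun i => (y i:ℝ)) i / (S.card : ℝ) ^ n = 0 := by
        apply Finset.sum_eq_zero
        intro i hi
        rw [Finset.mem_compl] at hi
        simp only [hSdef, Finset.mem_filter, Finset.mem_univ, true_and, not_not] at hi
        simp [hi]
      have herase : ∑ i ∈ S.erase l, (fun i => (y i:ℝ)) i / (S.card : ℝ)
          = ((S.card - 1 : ℕ) : ℝ) * (-1 / (S.card : ℝ)) := by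
        have hterm : ∀ i ∈ S.erase l, (fun i => (y i:ℝ)) i / (S.card : ℝ)
            = -1 / (S.card : ℝ) := by
          intro i hi
          rw [Finset.mem_erase] at hi
          have := hSother i hi.2 hi.1
          simp [this]
        rw [Finset.sum_congr rfl hterm, Finset.sum_const,
          Finset.card_erase_of_mem memS, nsmul_eq_mul]
      rw [hcompl, herase] at hNS
      have hcpos : 2 ≤ (S.card : ℝ) := by exact_mod_cast hc2
      have hone : 1 ≤ S.card := by omega
      have hcast : ((S.card - 1 : ℕ) : ℝ) = (S.card : ℝ) - 1 := by
        push_cast [Nat.cast_sub hone]; ring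
      rw [hcast] at hNS
      have hval : -(fun i => (y i:ℝ)) l / (S.card : ℝ)
          + ((S.card:ℝ) - 1) * (-1 / (S.card : ℝ)) - 0 = -1 := by
        simp only [hl1]
        push_cast
        field_simp
        ring
      rw [hval] at hNS
      norm_num at hNS
    · have hcard1 : S.card = 1 := by
        have : 0 < S.card := Finset.card_pos.mpr ⟨l, memS⟩
        omega
      obtain ⟨a, ha⟩ := Finset.card_eq_one.mp hcard1
      have hal : a = l := by
        have := memS
        rw [ha, Finset.mem_singleton] at this
        exact this.symm
      subst hal
      have hz : ∀ i, i ≠ a → y i = 0 := by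
        intro i hi
        by_contra hne
        have : i ∈ S := by simp [hSdef, hne]
        rw [ha, Finset.mem_singleton] at this
        exact hi this
      have hJl := hJ a
      unfold lhsJ at hJl
      have e1 : ∑ i ∈ Finset.univ.filter (fun i => i < a), x i / 2^(i.val+1) = 0 := by
        apply Finset.sum_eq_zero
        intro i hi
        simp only [Finset.mem_filter, Finset.mem_univ, true_and] at hi
        have hxi : x i = 0 := by simp [hxdef, hz i (ne_of_lt hi)]
        rw [hxi]
        simp
      have e2 : ∑ i ∈ Finset.univ.filter (fun i => a < i), x i / 2^(i.val) = 0 := by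
        apply Finset.sum_eq_zero
        intro i hi
        simp only [Finset.mem_filter, Finset.mem_univ, true_and] at hi
        have hxi : x i = 0 := by simp [hxdef, hz i (ne_of_gt hi)]
        rw [hxi]
        simp
      rw [e1, e2] at hJl
      have hxa : x a = 1 := by simp [hxdef, hl1]
      rw [hxa] at hJl
      norm_num at hJl

open Finset in
lemma lb_allsign {n : ℕ} (y : Fin n → ℤ)
    (hJ : ∀ j, |lhsJ j (fun i => (y i : ℝ))| < 1)
    (hpos : ∀ m, 0 ≤ y m) (i0 : Fin n) (hi0 : y i0 ≠ 0) : False := by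
  classical
  set x : Fin n → ℝ := fun i => (y i : ℝ) with hxdef
  set S : Finset (Fin n) := Finset.univ.filter (fun i => y i ≠ 0) with hSdef
  have hSne : S.Nonempty := ⟨i0, by simp [hSdef, hi0]⟩
  set l : Fin n := S.min' hSne with hldef
  have hlmem : l ∈ S := S.min'_mem hSne
  have hlnz : y l ≠ 0 := by
    have := hlmem
    simp only [hSdef, Finset.mem_filter, Finset.mem_univ, true_and] at this
    exact this
  have hbelow : ∀ b, b < l → y b = 0 := by
    intro b hb
    by_contra hnb
    have hbS : b ∈ S := by simp [hSdef, hnb]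
    exact absurd (S.min'_le b hbS) (not_le.mpr hb)
  have hx1 : (1:ℝ) ≤ x l := by
    have h1 : 1 ≤ y l := by have := hpos l; omega
    simp only [hxdef]
    exact_mod_cast h1
  have hJl := hJ l
  unfold lhsJ at hJl
  have e1 : ∑ i ∈ Finset.univ.filter (fun i => i < l), x i / 2^(i.val+1) = 0 := by
    apply Finset.sum_eq_zero
    intro i hi
    simp only [Finset.mem_filter, Finset.mem_univ, true_and] at hi
    have hxi : x i = 0 := by simp [hxdef, hbelow i hi]
    rw [hxi]; simp
  have e2 : (0:ℝ) ≤ ∑ i ∈ Finset.univ.filter (fun i => l < i), x i / 2^(i.val) := by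
    apply Finset.sum_nonneg
    intro i _
    apply div_nonneg _ (by positivity)
    simp only [hxdef]
    exact_mod_cast hpos i
  rw [e1] at hJl
  rw [abs_lt] at hJl
  linarith [hJl.2]

open Finset in
lemma lb_cast3 {a : ℤ} (h : |(a:ℝ)| < 3) : |(a:ℝ)| ≤ 2 := by
  have h1 : |a| < 3 := by rw [← Int.cast_abs] at h; exact_mod_cast h
  have h2 : |a| ≤ 2 := by omega
  rw [← Int.cast_abs]; exact_mod_cast h2

open Finset in
lemma lb_key {n : ℕ} (h0 : 0 < n) (y : Fin n → ℤ)
    (hJ : ∀ j, |lhsJ j (fun i => (y i : ℝ))| < 1)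
    (hN : ∀ N : Finset (Fin n), ∀ h2 : 2 ≤ N.card,
      |lhsN N (Finset.card_pos.mp (lt_of_lt_of_le (by norm_num) h2)) (fun i => (y i : ℝ))| < 1) :
    ∀ i, y i = 0 := by
  classical
  set x : Fin n → ℝ := fun i => (y i : ℝ) with hxdef
  set u : ℝ := ∑ i, x i / 2^(i.val) with hudef
  have hu : |u| < 1 := by rw [hudef, ← lb_lhsJ_zero h0]; exact hJ _
  -- Step 1: |y j| ≤ 2 for all j with j.val ≥ 1, by downward induction
  have box2' : ∀ m : ℕ, ∀ j : Fin n, n - j.val ≤ m → 1 ≤ j.val → |x j| ≤ 2 := by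
    intro m
    induction m with
    | zero => intro j hm h1; exact absurd hm (by have := j.isLt; omega)
    | succ m ih =>
      intro j hm h1
      have htail : ∀ i, j < i → |x i| ≤ 2 := by
        intro i hi
        rw [Fin.lt_def] at hi
        exact ih i (by omega) (by omega)
      have hT := lb_tail_abs_le j x 2 (by norm_num) htail
      have hid := lb_lhsJ_eq j x
      have hfj := hJ j
      by_contra hgt
      push_neg at hgt
      have h3 : (3:ℝ) ≤ |x j| := by
        have hgt' : (2:ℝ) < |x j| := hgt
        have h2' : 2 < |y j| := by
          rw [hxdef, ← Int.cast_abs] at hgt'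
          exact_mod_cast hgt'
        have h3' : 3 ≤ |y j| := by omega
        rw [hxdef, ← Int.cast_abs]
        exact_mod_cast h3'
      set T : ℝ := ∑ i ∈ Finset.univ.filter (fun i => j < i), x i / 2^(i.val) with hTdef
      set p : ℝ := 1/2^(j.val) with hpdef
      have hp2 : (1:ℝ)/2^(j.val+1) = p/2 := by rw [hpdef, pow_succ]; ring
      have hppos : 0 < p := by rw [hpdef]; positivity
      have hple : p ≤ 1/2 := by
        rw [hpdef]
        have h2j : (2:ℝ) ≤ 2^(j.val) := by
          calc (2:ℝ) = 2^1 := (pow_one 2).symm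
          _ ≤ 2^(j.val) := by
              apply pow_le_pow_right₀ (by norm_num) h1
        exact one_div_le_one_div_of_le (by norm_num) h2j
      have e1 : x j * (1 - 1/2^(j.val+1)) = lhsJ j x - u/2 - T/2 := by
        rw [hid, hudef, hTdef]; ring
      have e2 : |lhsJ j x - u/2 - T/2| ≤ |lhsJ j x| + |u|/2 + |T|/2 := by
        have ha := abs_add_three (lhsJ j x) (-(u/2)) (-(T/2))
        have heq : lhsJ j x + -(u/2) + -(T/2) = lhsJ j x - u/2 - T/2 := by ring
        rw [heq, abs_neg, abs_neg, abs_div, abs_div] at ha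
        simpa using ha
      have habs : |x j| * (1 - p/2) ≤ |lhsJ j x| + |u|/2 + |T|/2 := by
        rw [← abs_of_pos (show (0:ℝ) < 1 - p/2 by linarith), ← abs_mul, ← hp2, e1]
        exact e2
      have hTb : |T| ≤ 2 * (p - (1/2)^(n-1)) := by
        have hc : ((1:ℝ)/2)^(j.val) = p := by rw [hpdef, div_pow, one_pow]
        rw [← hc]
        exact hT
      have hd : (0:ℝ) < (1/2)^(n-1) := by positivity
      nlinarith [h3, habs, hTb, hfj, hu, hppos, hple]
  have box2 : ∀ j : Fin n, |x j| ≤ 2 := by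
    intro j
    rcases Nat.eq_zero_or_pos j.val with hj0 | hj1
    · have hjeq : j = ⟨0, h0⟩ := by apply Fin.ext; simpa using hj0
      subst hjeq
      have hsp := lb_sum_split (⟨0,h0⟩ : Fin n) (fun i => x i / 2^(i.val))
      have hempty : Finset.univ.filter (fun i : Fin n => i < ⟨0,h0⟩) = ∅ := by
        ext i
        simp only [Finset.mem_filter, Finset.mem_univ, true_and, Fin.lt_def,
          Finset.notMem_empty, iff_false]
        omega
      rw [hempty, Finset.sum_empty] at hsp
      have htail0 : ∀ i, (⟨0,h0⟩ : Fin n) < i → |x i| ≤ 2 := by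
        intro i hi
        rw [Fin.lt_def] at hi
        exact box2' n i (by omega) (by simp at hi; omega)
      have hT := lb_tail_abs_le (⟨0,h0⟩ : Fin n) x 2 (by norm_num) htail0
      have hub : |x ⟨0,h0⟩| < 3 := by
        have hx0 : x ⟨0,h0⟩ = u - ∑ i ∈ Finset.univ.filter (fun i => (⟨0,h0⟩:Fin n) < i),
            x i / 2^(i.val) := by
          rw [hudef, hsp]
          simp
        rw [hx0]
        have hTle : |∑ i ∈ Finset.univ.filter (fun i => (⟨0,h0⟩:Fin n) < i), x i / 2^(i.val)|
            ≤ 2 := by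
          refine hT.trans ?_
          have hd : (0:ℝ) < (1/2)^(n-1) := by positivity
          simp only [Fin.val_mk]
          nlinarith
        have habs2 : |u - ∑ i ∈ Finset.univ.filter (fun i => (⟨0,h0⟩:Fin n) < i), x i / 2^(i.val)|
            ≤ |u| + |∑ i ∈ Finset.univ.filter (fun i => (⟨0,h0⟩:Fin n) < i), x i / 2^(i.val)| := by
          rw [sub_eq_add_neg]
          refine (abs_add_le _ _).trans ?_
          rw [abs_neg]
        linarith
      exact lb_cast3 hub
    · exact box2' n j (by omega) hj1
  -- integer 2-box
  have box2i : ∀ j : Fin n, |y j| ≤ 2 := by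
    intro j
    have := box2 j
    rw [hxdef, ← Int.cast_abs] at this
    exact_mod_cast this
  -- Step 2: |y j| ≤ 1 for all j
  have hJneg : ∀ j, |lhsJ j (fun i => ((-(y i) : ℤ) : ℝ))| < 1 := by
    intro j
    have heq : (fun i => ((-(y i) : ℤ) : ℝ)) = fun i => -(x i) := by
      funext i; push_cast [hxdef]; ring
    rw [heq, lb_lhsJ_neg, abs_neg]
    exact hJ j
  have box1i : ∀ j : Fin n, |y j| ≤ 1 := by
    by_contra hc
    push_neg at hc
    obtain ⟨i0, hi0⟩ := hc
    have h2 : |y i0| = 2 := by have := box2i i0; omega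
    have hpair : ∀ m : Fin n, m ≠ i0 → |y m - y i0| ≤ 2 := by
      intro m hm
      rcases lt_or_gt_of_ne hm with hlt | hgt
      · have := lb_pair y m i0 hlt box2 hN
        have h' : |(y i0 : ℝ) - (y m : ℝ)| ≤ 2 := this
        rw [show (y i0 : ℝ) - (y m : ℝ) = -((y m : ℝ) - (y i0 : ℝ)) by ring, abs_neg] at h'
        rw [← Int.cast_sub, ← Int.cast_abs] at h'
        exact_mod_cast h'
      · have := lb_pair y i0 m hgt box2 hN
        rw [← Int.cast_sub, ← Int.cast_abs] at this
        exact_mod_cast this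
    rcases abs_eq (by norm_num : (0:ℤ) ≤ 2) |>.mp h2 with hpos2 | hneg2
    · -- y i0 = 2 : all entries nonneg
      have hpos : ∀ m, 0 ≤ y m := by
        intro m
        by_cases hm : m = i0
        · rw [hm, hpos2]; norm_num
        · have := hpair m hm; rw [abs_le] at this; omega
      exact lb_allsign y hJ hpos i0 (by omega)
    · -- y i0 = -2 : all entries nonpos; apply to -y
      have hpos : ∀ m, 0 ≤ -(y m) := by
        intro m
        by_cases hm : m = i0
        · rw [hm, hneg2]; norm_num
        · have := hpair m hm; rw [abs_le] at this; omega
      exact lb_allsign (fun i => -(y i)) hJneg hpos i0 (by simp; omega)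
  have box1 : ∀ j : Fin n, |(y j : ℝ)| ≤ 1 := by
    intro j
    rw [← Int.cast_abs]
    exact_mod_cast box1i j
  -- Step 3: conclude
  intro i
  by_contra hi
  set S : Finset (Fin n) := Finset.univ.filter (fun m => y m ≠ 0) with hSdef
  have hSne : S.Nonempty := ⟨i, by simp [hSdef, hi]⟩
  set l : Fin n := S.min' hSne with hldef
  have hlmem : l ∈ S := S.min'_mem hSne
  have hlnz : y l ≠ 0 := by
    have := hlmem
    simp only [hSdef, Finset.mem_filter, Finset.mem_univ, true_and] at this
    exact this
  have hbelow : ∀ b, b < l → y b = 0 := by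
    intro b hb
    by_contra hnb
    have hbS : b ∈ S := by simp [hSdef, hnb]
    exact absurd (S.min'_le b hbS) (not_le.mpr hb)
  have hl1 : y l = 1 ∨ y l = -1 := by
    have hb := box1i l
    rw [abs_le] at hb
    omega
  rcases hl1 with hl1 | hl1
  · exact lb_lastStep y hJ hN box1 l hl1 hbelow
  · have hNneg : ∀ N : Finset (Fin n), ∀ h2 : 2 ≤ N.card,
        |lhsN N (Finset.card_pos.mp (lt_of_lt_of_le (by norm_num) h2))
          (fun i => ((-(y i) : ℤ) : ℝ))| < 1 := by
      intro N h2
      have heq : (fun i => ((-(y i) : ℤ) : ℝ)) = fun i => -(x i) := by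
        funext i; push_cast [hxdef]; ring
      rw [heq, lb_lhsN_neg, abs_neg]
      exact hN N h2
    have box1' : ∀ j : Fin n, |((-(y j) : ℤ) : ℝ)| ≤ 1 := by
      intro j
      push_cast
      rw [abs_neg]
      exact box1 j
    exact lb_lastStep (fun i => -(y i)) hJneg hNneg box1' l
      (by show -(y l) = 1; rw [hl1]; norm_num)
      (fun b hb => by show -(y b) = 0; rw [hbelow b hb]; norm_num)

theorem stmt_12 {n : ℕ} (hn : 1 ≤ n) (y : Fin n → ℤ) :
    (∀ idx : LBIdx n, lbIneq idx (fun i => (y i : ℝ)) < 1) ↔ y = 0 := by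
  constructor
  · intro H
    have hJ : ∀ j, |lhsJ j (fun i => (y i : ℝ))| < 1 := by
      intro j
      rw [abs_lt]
      constructor
      · have h := H (Sum.inl j, false)
        simp only [lbIneq] at h
        norm_num at h
        linarith [h]
      · have h := H (Sum.inl j, true)
        simp only [lbIneq] at h
        norm_num at h
        linarith [h]
    have hN : ∀ N : Finset (Fin n), ∀ h2 : 2 ≤ N.card,
        |lhsN N (Finset.card_pos.mp (lt_of_lt_of_le (by norm_num) h2))
          (fun i => (y i : ℝ))| < 1 := by
      intro N h2
      rw [abs_lt]
      constructor
      · have h := H (Sum.inr ⟨N, h2⟩, false)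
        simp only [lbIneq] at h
        norm_num at h
        linarith [h]
      · have h := H (Sum.inr ⟨N, h2⟩, true)
        simp only [lbIneq] at h
        norm_num at h
        linarith [h]
    have hz := lb_key (by omega) y hJ hN
    funext i
    simpa using hz i
  · rintro rfl
    intro idx
    have hJ0 : ∀ j : Fin n, lhsJ j (fun i => (((0 : Fin n → ℤ) i : ℤ) : ℝ)) = 0 := by
      intro j; unfold lhsJ; simp
    have hN0 : ∀ (N : Finset (Fin n)) (h : N.Nonempty),
        lhsN N h (fun i => (((0 : Fin n → ℤ) i : ℤ) : ℝ)) = 0 := by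
      intro N h; unfold lhsN; simp
    obtain ⟨s, b⟩ := idx
    cases s with
    | inl j =>
      simp only [lbIneq, hJ0 j]
      cases b <;> norm_num
    | inr N =>
      simp only [lbIneq, hN0]
      cases b <;> norm_num
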